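/- Let ρ be a d×d complex positive semidefinite matrix with trace 1, let 0 < α < 1, and let U_1, …, U_N (N ≥ 2) be d×d unitary matrices. Then: ∑_{s=1}^N I^α_ρ(U_s) ≥ (1/N) · [ I^α_ρ(∑_{s=1}^N U_s) + (2/(N(N − 1))) · (∑_{1 ≤ s < t ≤ N} √(I^α_ρ(U_s − U_t)))² ], where √ denotes the real square root. -/

import Mathlib

open Matrix Finset
open scoped ComplexOrder

/-- `ρ^α` via the continuous functional calculus applied to `t ↦ t ^ α`. -/
noncomputable def mpow {d : ℕ} (ρ : Matrix (Fin d) (Fin d) ℂ) (α : ℝ) :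
    Matrix (Fin d) (Fin d) ℂ :=
  cfc (fun t : ℝ => t ^ α) ρ

/-- The Wigner–Yanase–Dyson skew information
`I^α_ρ(K) = −(1/2) Tr([ρ^α, K†] [ρ^{1−α}, K])` of an arbitrary matrix `K`. -/
noncomputable def wyd {d : ℕ} (ρ : Matrix (Fin d) (Fin d) ℂ) (α : ℝ)
    (K : Matrix (Fin d) (Fin d) ℂ) : ℝ :=
  (-(1 / 2 : ℂ) *
    ((mpow ρ α * Kᴴ - Kᴴ * mpow ρ α) * (mpow ρ (1 - α) * K - K * mpow ρ (1 - α))).trace).re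

/-- the underlying sesquilinear form -/
noncomputable def tform {d : ℕ} (ρ : Matrix (Fin d) (Fin d) ℂ) (α : ℝ)
    (K L : Matrix (Fin d) (Fin d) ℂ) : ℂ :=
  -(1 / 2 : ℂ) *
    ((mpow ρ α * Kᴴ - Kᴴ * mpow ρ α) * (mpow ρ (1 - α) * L - L * mpow ρ (1 - α))).trace

lemma wyd_eq_tform {d : ℕ} (ρ : Matrix (Fin d) (Fin d) ℂ) (α : ℝ)
    (K : Matrix (Fin d) (Fin d) ℂ) : wyd ρ α K = (tform ρ α K K).re := rfl

lemma tform_add_left {d : ℕ} (ρ : Matrix (Fin d) (Fin d) ℂ) (α : ℝ)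
    (K K' L : Matrix (Fin d) (Fin d) ℂ) :
    tform ρ α (K + K') L = tform ρ α K L + tform ρ α K' L := by
  unfold tform
  rw [show (mpow ρ α * (K + K')ᴴ - (K + K')ᴴ * mpow ρ α) *
        (mpow ρ (1 - α) * L - L * mpow ρ (1 - α)) =
      (mpow ρ α * Kᴴ - Kᴴ * mpow ρ α) * (mpow ρ (1 - α) * L - L * mpow ρ (1 - α)) +
      (mpow ρ α * K'ᴴ - K'ᴴ * mpow ρ α) * (mpow ρ (1 - α) * L - L * mpow ρ (1 - α)) by
    rw [conjTranspose_add]; noncomm_ring]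
  rw [trace_add]; ring

lemma tform_add_right {d : ℕ} (ρ : Matrix (Fin d) (Fin d) ℂ) (α : ℝ)
    (K L L' : Matrix (Fin d) (Fin d) ℂ) :
    tform ρ α K (L + L') = tform ρ α K L + tform ρ α K L' := by
  unfold tform
  rw [show (mpow ρ α * Kᴴ - Kᴴ * mpow ρ α) *
        (mpow ρ (1 - α) * (L + L') - (L + L') * mpow ρ (1 - α)) =
      (mpow ρ α * Kᴴ - Kᴴ * mpow ρ α) * (mpow ρ (1 - α) * L - L * mpow ρ (1 - α)) +
      (mpow ρ α * Kᴴ - Kᴴ * mpow ρ α) * (mpow ρ (1 - α) * L' - L' * mpow ρ (1 - α)) by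
    noncomm_ring]
  rw [trace_add]; ring

lemma tform_neg_neg {d : ℕ} (ρ : Matrix (Fin d) (Fin d) ℂ) (α : ℝ)
    (K L : Matrix (Fin d) (Fin d) ℂ) :
    tform ρ α (-K) (-L) = tform ρ α K L := by
  unfold tform
  rw [show (mpow ρ α * (-K)ᴴ - (-K)ᴴ * mpow ρ α) *
        (mpow ρ (1 - α) * (-L) - (-L) * mpow ρ (1 - α)) =
      (mpow ρ α * Kᴴ - Kᴴ * mpow ρ α) * (mpow ρ (1 - α) * L - L * mpow ρ (1 - α)) by
    rw [conjTranspose_neg]; noncomm_ring]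

lemma tform_zero_left {d : ℕ} (ρ : Matrix (Fin d) (Fin d) ℂ) (α : ℝ)
    (L : Matrix (Fin d) (Fin d) ℂ) : tform ρ α 0 L = 0 := by
  unfold tform
  simp

lemma tform_sum_left {d N : ℕ} (ρ : Matrix (Fin d) (Fin d) ℂ) (α : ℝ)
    (f : Fin N → Matrix (Fin d) (Fin d) ℂ) (L : Matrix (Fin d) (Fin d) ℂ) :
    tform ρ α (∑ s, f s) L = ∑ s, tform ρ α (f s) L := by
  classical
  induction (univ : Finset (Fin N)) using Finset.cons_induction with
  | empty => simpa using tform_zero_left ρ α L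
  | cons a s ha ih => rw [Finset.sum_cons, Finset.sum_cons, tform_add_left, ih]

lemma tform_zero_right {d : ℕ} (ρ : Matrix (Fin d) (Fin d) ℂ) (α : ℝ)
    (K : Matrix (Fin d) (Fin d) ℂ) : tform ρ α K 0 = 0 := by
  unfold tform
  simp

lemma tform_sum_right {d N : ℕ} (ρ : Matrix (Fin d) (Fin d) ℂ) (α : ℝ)
    (K : Matrix (Fin d) (Fin d) ℂ) (f : Fin N → Matrix (Fin d) (Fin d) ℂ) :
    tform ρ α K (∑ s, f s) = ∑ s, tform ρ α K (f s) := by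
  classical
  induction (univ : Finset (Fin N)) using Finset.cons_induction with
  | empty => simpa using tform_zero_right ρ α K
  | cons a s ha ih => rw [Finset.sum_cons, Finset.sum_cons, tform_add_right, ih]

lemma tform_sub_sub {d : ℕ} (ρ : Matrix (Fin d) (Fin d) ℂ) (α : ℝ)
    (K K' L L' : Matrix (Fin d) (Fin d) ℂ) :
    tform ρ α (K - K') (L - L') =
      tform ρ α K L - tform ρ α K L' - tform ρ α K' L + tform ρ α K' L' := by
  have h1 := tform_add_left ρ α K (-K') (L - L')
  have h2 := tform_add_right ρ α K L (-L')
  have h3 := tform_add_right ρ α (-K') L (-L')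
  have h4 := tform_neg_neg ρ α K' L'
  have h5 : tform ρ α K (-L') = -tform ρ α K L' := by
    have := tform_add_right ρ α K L' (-L')
    simp only [add_neg_cancel, tform_zero_right] at this
    linear_combination -this
  have h6 : tform ρ α (-K') L = -tform ρ α K' L := by
    have := tform_add_left ρ α K' (-K') L
    simp only [add_neg_cancel, tform_zero_left] at this
    linear_combination -this
  have h7 : tform ρ α (-K') (-L') = tform ρ α K' L' := tform_neg_neg ρ α K' L'
  calc tform ρ α (K - K') (L - L')
      = tform ρ α (K + -K') (L + -L') := by rw [sub_eq_add_neg, sub_eq_add_neg]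
    _ = _ := by
        rw [tform_add_left, tform_add_right, tform_add_right, h5, h6, h7]
        ring

/-- Sum of a symmetric, diagonally-vanishing function over all pairs equals twice
the sum over ordered pairs. -/
lemma pair_sum {N : ℕ} {M : Type*} [AddCommMonoid M] (F : Fin N × Fin N → M)
    (hsym : ∀ p : Fin N × Fin N, F p.swap = F p)
    (hdiag : ∀ i, F (i, i) = 0) :
    ∑ p : Fin N × Fin N, F p =
      (∑ p ∈ univ.filter (fun p : Fin N × Fin N => p.1 < p.2), F p) +
      ∑ p ∈ univ.filter (fun p : Fin N × Fin N => p.1 < p.2), F p := by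
  classical
  rw [← Finset.sum_filter_add_sum_filter_not univ (fun p : Fin N × Fin N => p.1 < p.2) F]
  congr 1
  have hsplit : univ.filter (fun p : Fin N × Fin N => ¬ p.1 < p.2) =
      (univ.filter (fun p : Fin N × Fin N => p.2 < p.1)) ∪
      (univ.filter (fun p : Fin N × Fin N => p.1 = p.2)) := by
    ext p
    simp only [Finset.mem_filter, Finset.mem_union, Finset.mem_univ, true_and]
    constructor
    · intro h
      rcases lt_or_eq_of_le (le_of_not_gt h) with h' | h'
      · exact Or.inl h'
      · exact Or.inr h'.symm
    · rintro (h | h)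
      · exact not_lt_of_gt h
      · exact h ▸ lt_irrefl _
  rw [hsplit, Finset.sum_union]
  · have h0 : ∑ p ∈ univ.filter (fun p : Fin N × Fin N => p.1 = p.2), F p = 0 := by
      refine Finset.sum_eq_zero fun p hp => ?_
      simp only [Finset.mem_filter] at hp
      have : p = (p.1, p.1) := Prod.ext rfl hp.2.symm
      rw [this]; exact hdiag _
    rw [h0, add_zero]
    refine Finset.sum_nbij' (fun p => p.swap) (fun p => p.swap) ?_ ?_ ?_ ?_ ?_
    · intro p hp; simp only [Finset.mem_filter, Finset.mem_univ, true_and] at hp ⊢; exact hp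
    · intro p hp; simp only [Finset.mem_filter, Finset.mem_univ, true_and] at hp ⊢; exact hp
    · intro p _; simp
    · intro p _; simp
    · intro p _; exact (hsym p).symm
  · rw [Finset.disjoint_filter]
    intro p _ h h'
    exact absurd h'.symm (ne_of_lt h)

lemma tform_parallelogram {d N : ℕ} (ρ : Matrix (Fin d) (Fin d) ℂ) (α : ℝ)
    (U : Fin N → Matrix (Fin d) (Fin d) ℂ) :
    (N : ℂ) * ∑ s, tform ρ α (U s) (U s) =
      tform ρ α (∑ s, U s) (∑ s, U s) +
      ∑ p ∈ univ.filter (fun p : Fin N × Fin N => p.1 < p.2),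
        tform ρ α (U p.1 - U p.2) (U p.1 - U p.2) := by
  classical
  set T := fun s t => tform ρ α (U s) (U t) with hT
  have hE : tform ρ α (∑ s, U s) (∑ s, U s) = ∑ s, ∑ t, T s t := by
    rw [tform_sum_left]
    exact Finset.sum_congr rfl fun s _ => tform_sum_right ρ α (U s) U
  set F : Fin N × Fin N → ℂ :=
    fun p => tform ρ α (U p.1 - U p.2) (U p.1 - U p.2) with hF
  have hsym : ∀ p : Fin N × Fin N, F p.swap = F p := by
    intro p
    simp only [hF, Prod.fst_swap, Prod.snd_swap]
    rw [show U p.2 - U p.1 = -(U p.1 - U p.2) by rw [neg_sub]]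
    exact tform_neg_neg ρ α _ _
  have hdiag : ∀ i : Fin N, F (i, i) = 0 := by
    intro i
    simp only [hF, sub_self]
    exact tform_zero_left ρ α _
  have hps := pair_sum F hsym hdiag
  have hcomm : ∑ s : Fin N, ∑ t : Fin N, T t s = ∑ s : Fin N, ∑ t : Fin N, T s t :=
    Finset.sum_comm
  have hsum : ∑ p : Fin N × Fin N, F p =
      (N : ℂ) * ∑ s, T s s + (N : ℂ) * ∑ s, T s s
        - (∑ s, ∑ t, T s t) - (∑ s, ∑ t, T s t) := by
    rw [Fintype.sum_prod_type]
    calc ∑ s : Fin N, ∑ t : Fin N, F (s, t)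
        = ∑ s : Fin N, ∑ t : Fin N, (T s s - T s t - T t s + T t t) := by
          refine Finset.sum_congr rfl fun s _ => Finset.sum_congr rfl fun t _ => ?_
          exact tform_sub_sub ρ α _ _ _ _
      _ = ∑ s : Fin N, ((N : ℂ) * T s s - ∑ t, T s t - ∑ t : Fin N, T t s + ∑ t, T t t) := by
          refine Finset.sum_congr rfl fun s _ => ?_
          rw [Finset.sum_add_distrib, Finset.sum_sub_distrib, Finset.sum_sub_distrib,
            Finset.sum_const, card_univ, Fintype.card_fin, nsmul_eq_mul]
      _ = _ := by
          rw [Finset.sum_add_distrib, Finset.sum_sub_distrib, Finset.sum_sub_distrib,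
            Finset.sum_const, card_univ, Fintype.card_fin, nsmul_eq_mul, hcomm]
          rw [← Finset.mul_sum]
          ring
  have hTs : ∑ s : Fin N, tform ρ α (U s) (U s) = ∑ s, T s s := rfl
  rw [hE, hTs]
  show (N : ℂ) * ∑ s, T s s = (∑ s, ∑ t, T s t) +
    ∑ p ∈ univ.filter (fun p : Fin N × Fin N => p.1 < p.2), F p
  rw [hsum] at hps
  linear_combination hps / 2

lemma mpow_eq_diag {d : ℕ} {ρ : Matrix (Fin d) (Fin d) ℂ} (hH : ρ.IsHermitian) (β : ℝ) :
    mpow ρ β = (hH.eigenvectorUnitary : Matrix (Fin d) (Fin d) ℂ) *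
      diagonal (fun i => ((hH.eigenvalues i ^ β : ℝ) : ℂ)) *
      (hH.eigenvectorUnitary : Matrix (Fin d) (Fin d) ℂ)ᴴ := by
  rw [mpow, hH.cfc_eq, Matrix.IsHermitian.cfc, ← Matrix.star_eq_conjTranspose]
  rfl

lemma wyd_nonneg {d : ℕ} {ρ : Matrix (Fin d) (Fin d) ℂ} (hρ : ρ.PosSemidef) {α : ℝ}
    (hα0 : 0 < α) (hα1 : α < 1) (K : Matrix (Fin d) (Fin d) ℂ) :
    0 ≤ wyd ρ α K := by
  classical
  have hH : ρ.IsHermitian := hρ.1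
  set V : Matrix (Fin d) (Fin d) ℂ := (hH.eigenvectorUnitary : Matrix (Fin d) (Fin d) ℂ) with hVdef
  have hV1 : Vᴴ * V = 1 := by
    rw [← Matrix.star_eq_conjTranspose]
    exact Unitary.star_mul_self_of_mem (hH.eigenvectorUnitary).2
  have hV2 : V * Vᴴ = 1 := by
    rw [← Matrix.star_eq_conjTranspose]
    exact Unitary.mul_star_self_of_mem (hH.eigenvectorUnitary).2
  have cancel1 : ∀ Z : Matrix (Fin d) (Fin d) ℂ, V * (Vᴴ * Z) = Z := fun Z => by
    rw [← Matrix.mul_assoc, hV2, Matrix.one_mul]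
  have cancel2 : ∀ Z : Matrix (Fin d) (Fin d) ℂ, Vᴴ * (V * Z) = Z := fun Z => by
    rw [← Matrix.mul_assoc, hV1, Matrix.one_mul]
  set lam : Fin d → ℝ := hH.eigenvalues with hlam
  have hlam0 : ∀ i, 0 ≤ lam i := fun i => hρ.eigenvalues_nonneg i
  set a : Fin d → ℝ := fun i => lam i ^ α with ha
  set b : Fin d → ℝ := fun i => lam i ^ (1 - α) with hb
  set Da : Matrix (Fin d) (Fin d) ℂ := diagonal (fun i => (a i : ℂ)) with hDa
  set Db : Matrix (Fin d) (Fin d) ℂ := diagonal (fun i => (b i : ℂ)) with hDb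
  have hA : mpow ρ α = V * Da * Vᴴ := mpow_eq_diag hH α
  have hB : mpow ρ (1 - α) = V * Db * Vᴴ := mpow_eq_diag hH (1 - α)
  set M : Matrix (Fin d) (Fin d) ℂ := Vᴴ * K * V with hM
  have hMH : Mᴴ = Vᴴ * Kᴴ * V := by
    rw [hM, Matrix.conjTranspose_mul, Matrix.conjTranspose_mul,
      Matrix.conjTranspose_conjTranspose, Matrix.mul_assoc]
  have e1 : mpow ρ α * Kᴴ - Kᴴ * mpow ρ α = V * (Da * Mᴴ - Mᴴ * Da) * Vᴴ := by
    rw [hA, hMH]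
    simp only [Matrix.mul_sub, Matrix.sub_mul, Matrix.mul_assoc, cancel1, cancel2,
      hV1, hV2, Matrix.mul_one, Matrix.one_mul]
  have e2 : mpow ρ (1 - α) * K - K * mpow ρ (1 - α) = V * (Db * M - M * Db) * Vᴴ := by
    rw [hB, hM]
    simp only [Matrix.mul_sub, Matrix.sub_mul, Matrix.mul_assoc, cancel1, cancel2,
      hV1, hV2, Matrix.mul_one, Matrix.one_mul]
  have etr : ((mpow ρ α * Kᴴ - Kᴴ * mpow ρ α) *
      (mpow ρ (1 - α) * K - K * mpow ρ (1 - α))).trace =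
      ((Da * Mᴴ - Mᴴ * Da) * (Db * M - M * Db)).trace := by
    rw [e1, e2]
    rw [show V * (Da * Mᴴ - Mᴴ * Da) * Vᴴ * (V * (Db * M - M * Db) * Vᴴ) =
        V * ((Da * Mᴴ - Mᴴ * Da) * (Db * M - M * Db)) * Vᴴ by
      simp only [Matrix.mul_assoc, cancel1, cancel2]]
    rw [Matrix.trace_mul_cycle, ← Matrix.mul_assoc, hV1, Matrix.one_mul]
  rw [wyd, etr]
  rw [Matrix.trace]
  have expand : ∀ i, ((Da * Mᴴ - Mᴴ * Da) * (Db * M - M * Db)).diag i =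
      ∑ j, ((a i : ℂ) * (starRingEnd ℂ) (M j i) - (starRingEnd ℂ) (M j i) * (a j : ℂ)) *
        ((b j : ℂ) * M j i - M j i * (b i : ℂ)) := by
    intro i
    rw [Matrix.diag_apply, Matrix.mul_apply]
    refine Finset.sum_congr rfl fun j _ => ?_
    rw [Matrix.sub_apply, Matrix.sub_apply, Matrix.diagonal_mul, Matrix.mul_diagonal,
      Matrix.diagonal_mul, Matrix.mul_diagonal, Matrix.conjTranspose_apply,
      Complex.star_def]
  have hre : (-(1 / 2 : ℂ) * ∑ i, ((Da * Mᴴ - Mᴴ * Da) * (Db * M - M * Db)).diag i).re =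
      ∑ i, ∑ j, (1 / 2 : ℝ) * ((a i - a j) * (b i - b j)) * Complex.normSq (M j i) := by
    rw [Finset.mul_sum, Complex.re_sum]
    refine Finset.sum_congr rfl fun i _ => ?_
    rw [expand i, Finset.mul_sum, Complex.re_sum]
    refine Finset.sum_congr rfl fun j _ => ?_
    have hmc : M j i * (starRingEnd ℂ) (M j i) = (Complex.normSq (M j i) : ℂ) :=
      Complex.mul_conj (M j i)
    have : -(1 / 2 : ℂ) * (((a i : ℂ) * (starRingEnd ℂ) (M j i) -
        (starRingEnd ℂ) (M j i) * (a j : ℂ)) *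
        ((b j : ℂ) * M j i - M j i * (b i : ℂ))) =
        (((1 / 2 : ℝ) * ((a i - a j) * (b i - b j)) * Complex.normSq (M j i) : ℝ) : ℂ) := by
      push_cast
      linear_combination (-(1 / 2 : ℂ) * ((a i : ℂ) - (a j : ℂ)) *
        ((b j : ℂ) - (b i : ℂ))) * hmc
    rw [this, Complex.ofReal_re]
  rw [hre]
  refine Finset.sum_nonneg fun i _ => Finset.sum_nonneg fun j _ => ?_
  have hab : 0 ≤ (a i - a j) * (b i - b j) := by
    rcases le_total (lam j) (lam i) with h | h
    · have h1 : a j ≤ a i := Real.rpow_le_rpow (hlam0 j) h (le_of_lt hα0)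
      have h2 : b j ≤ b i := Real.rpow_le_rpow (hlam0 j) h (by linarith)
      exact mul_nonneg (by linarith) (by linarith)
    · have h1 : a i ≤ a j := Real.rpow_le_rpow (hlam0 i) h (le_of_lt hα0)
      have h2 : b i ≤ b j := Real.rpow_le_rpow (hlam0 i) h (by linarith)
      nlinarith
  have := Complex.normSq_nonneg (M j i)
  positivity

lemma card_lt_pairs (N : ℕ) :
    ((univ.filter (fun p : Fin N × Fin N => p.1 < p.2)).card : ℝ) * 2 =
      (N : ℝ) * (N : ℝ) - (N : ℝ) := by
  classical
  set F : Fin N × Fin N → ℝ := fun p => if p.1 = p.2 then 0 else 1 with hF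
  have hsym : ∀ p : Fin N × Fin N, F p.swap = F p := by
    intro p
    simp only [hF, Prod.fst_swap, Prod.snd_swap, eq_comm]
  have hdiag : ∀ i : Fin N, F (i, i) = 0 := by intro i; simp [hF]
  have hps := pair_sum F hsym hdiag
  have htot : ∑ p : Fin N × Fin N, F p = (N : ℝ) * (N : ℝ) - (N : ℝ) := by
    rw [Fintype.sum_prod_type]
    have hrow : ∀ i : Fin N, ∑ j, F (i, j) = (N : ℝ) - 1 := by
      intro i
      have : ∀ j : Fin N, F (i, j) = 1 - (if i = j then (1 : ℝ) else 0) := by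
        intro j
        simp only [hF]
        by_cases h : i = j <;> simp [h]
      rw [Finset.sum_congr rfl fun j _ => this j, Finset.sum_sub_distrib,
        Finset.sum_const, card_univ, Fintype.card_fin, Finset.sum_ite_eq, if_pos (mem_univ i)]
      simp
    rw [Finset.sum_congr rfl fun i _ => hrow i, Finset.sum_const, card_univ, Fintype.card_fin,
      nsmul_eq_mul]
    ring
  have hlt : ∑ p ∈ univ.filter (fun p : Fin N × Fin N => p.1 < p.2), F p =
      ((univ.filter (fun p : Fin N × Fin N => p.1 < p.2)).card : ℝ) := by
    rw [Finset.sum_congr rfl (fun p hp => ?_), Finset.sum_const, nsmul_eq_mul, mul_one]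
    simp only [Finset.mem_filter] at hp
    simp only [hF, if_neg (ne_of_lt hp.2)]
  rw [htot, hlt] at hps
  linarith


theorem unitary_uncertainty_Lb2 (d N : ℕ) (hN : 2 ≤ N)
    (ρ : Matrix (Fin d) (Fin d) ℂ) (hρ : ρ.PosSemidef) (hTr : ρ.trace = 1)
    (α : ℝ) (hα0 : 0 < α) (hα1 : α < 1)
    (U : Fin N → Matrix (Fin d) (Fin d) ℂ)
    (hU : ∀ s, U s ∈ Matrix.unitaryGroup (Fin d) ℂ) :
    ∑ s, wyd ρ α (U s) ≥
      (1 / (N : ℝ)) *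
        (wyd ρ α (∑ s, U s) +
          (2 / ((N : ℝ) * ((N : ℝ) - 1))) *
            (∑ p ∈ univ.filter (fun p : Fin N × Fin N => p.1 < p.2),
              Real.sqrt (wyd ρ α (U p.1 - U p.2))) ^ 2) := by

  classical
  have keyR : (N : ℝ) * ∑ s, wyd ρ α (U s) =
      wyd ρ α (∑ s, U s) +
      ∑ p ∈ univ.filter (fun p : Fin N × Fin N => p.1 < p.2),
        wyd ρ α (U p.1 - U p.2) := by
    have h := congrArg Complex.re (tform_parallelogram ρ α U)
    simp only [Complex.add_re, Complex.mul_re, Complex.natCast_re, Complex.natCast_im,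
      Complex.re_sum, zero_mul, sub_zero] at h
    simpa only [wyd_eq_tform, Complex.re_sum] using h
  set lt := univ.filter (fun p : Fin N × Fin N => p.1 < p.2) with hlt
  set P : ℝ := ∑ p ∈ lt, wyd ρ α (U p.1 - U p.2) with hP
  set S : ℝ := ∑ p ∈ lt, Real.sqrt (wyd ρ α (U p.1 - U p.2)) with hS
  have hPnn : 0 ≤ P := Finset.sum_nonneg fun p _ => wyd_nonneg hρ hα0 hα1 _
  have hcs : S ^ 2 ≤ (lt.card : ℝ) * P := by
    have h := sq_sum_le_card_mul_sum_sq (s := lt)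
      (f := fun p : Fin N × Fin N => Real.sqrt (wyd ρ α (U p.1 - U p.2)))
    have hsq : ∑ p ∈ lt, Real.sqrt (wyd ρ α (U p.1 - U p.2)) ^ 2 = P := by
      refine Finset.sum_congr rfl fun p _ => ?_
      exact Real.sq_sqrt (wyd_nonneg hρ hα0 hα1 _)
    rw [hsq] at h
    exact h
  have hcard := card_lt_pairs N
  rw [← hlt] at hcard
  have hn2 : (2 : ℝ) ≤ (N : ℝ) := by exact_mod_cast hN
  have hn0 : (0 : ℝ) < (N : ℝ) := by linarith
  have hd0 : (0 : ℝ) < (N : ℝ) * ((N : ℝ) - 1) := by nlinarith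
  have h1 : (2 / ((N : ℝ) * ((N : ℝ) - 1))) * S ^ 2 ≤ P := by
    rw [div_mul_eq_mul_div, div_le_iff₀ hd0]
    calc (2 : ℝ) * S ^ 2 ≤ 2 * ((lt.card : ℝ) * P) := by linarith
      _ = ((N : ℝ) * (N : ℝ) - (N : ℝ)) * P := by
          rw [show (2 : ℝ) * ((lt.card : ℝ) * P) = ((lt.card : ℝ) * 2) * P by ring, hcard]
      _ = P * ((N : ℝ) * ((N : ℝ) - 1)) := by ring
  have h3 : (1 / (N : ℝ)) * (wyd ρ α (∑ s, U s) + P) = ∑ s, wyd ρ α (U s) := by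
    rw [← keyR]
    field_simp
  calc (1 / (N : ℝ)) * (wyd ρ α (∑ s, U s) +
        (2 / ((N : ℝ) * ((N : ℝ) - 1))) * S ^ 2)
      ≤ (1 / (N : ℝ)) * (wyd ρ α (∑ s, U s) + P) := by
        apply mul_le_mul_of_nonneg_left (by linarith) (by positivity)
    _ = ∑ s, wyd ρ α (U s) := h3
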